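/- arXiv:2005.04453 — 2 statements merged into one kernel-verified Lean document; each statement's English description precedes it below -/
import Mathlib

section
/- Given a commutative cube of graphs where the bottom face and top face are pushouts along monomorphisms, the back vertical faces are pullbacks, the maps λ₁ : X → B and λ₂ : Y → C (the back vertical maps) and the legs of the bottom cospan satisfy the right lifting property against s : • → (•→•) (i.e., are 1-fibrations on a chosen class of edges), and the relevant legs are monomorphisms, the induced map μ : Z → D between the pushouts satisfies the same right lifting property. -/
open CategoryTheory CategoryTheory.Limits

/-- The category of directed graphs, presented as functors from the walking parallel pair
(the value at `zero` is the set of edges, the value at `one` the set of vertices, and the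
two maps are source and target). -/
abbrev Gph : Type 1 := WalkingParallelPair ⥤ Type

/-- The graph with one vertex and no edge. -/
def walkingNode : Gph :=
  parallelPair (X := PEmpty.{1}) (Y := PUnit.{1}) (TypeCat.ofHom PEmpty.elim) (TypeCat.ofHom PEmpty.elim)

/-- The walking edge: two vertices and a single edge from `false` to `true`. -/
def walkingEdge : Gph :=
  parallelPair (X := PUnit.{1}) (Y := Bool) (TypeCat.ofHom fun _ => false) (TypeCat.ofHom fun _ => true)

/-- The inclusion of the one-node graph as the source of the walking edge. -/
def srcNode : walkingNode ⟶ walkingEdge :=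
  parallelPairHom _ _ _ _ (TypeCat.ofHom PEmpty.elim) (TypeCat.ofHom fun _ => false)
    (by ext x; exact x.elim) (by ext x; exact x.elim)

/-! ### Auxiliary lemmas -/

/-- Elements of a pushout in `Type` come from one of the two legs. -/
lemma Gph.pushout_cases {S X₁ X₂ P : Type u} {a : S ⟶ X₁} {b : S ⟶ X₂} {c : X₁ ⟶ P}
    {d : X₂ ⟶ P} (h : IsPushout a b c d) (z : P) : (∃ x, c x = z) ∨ (∃ y, d y = z) := by
  obtain ⟨j, y, hy⟩ := Types.jointly_surjective_of_isColimit h.isColimit z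
  rcases j with _ | _ | _
  · exact Or.inl ⟨a y, hy⟩
  · exact Or.inl ⟨y, hy⟩
  · exact Or.inr ⟨y, hy⟩

/-- In a pushout in `Type` along an injection, the images of the two legs intersect in the
image of the span. -/
lemma Gph.pushout_inter {S X₁ X₂ P : Type u} {a : S ⟶ X₁} {b : S ⟶ X₂} {c : X₁ ⟶ P}
    {d : X₂ ⟶ P} (h : IsPushout a b c d) (ha : Function.Injective a) {x : X₁} {y : X₂}
    (e : c x = d y) : ∃ s, a s = x ∧ b s = y :=
  (Types.pushoutCocone_inl_eq_inr_iff_of_isColimit h.isColimit ha x y).mp e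

/-- Elementwise description of a pullback in `Type`. -/
lemma Gph.pullback_pt {P X Y Z : Type u} {fst : P ⟶ X} {snd : P ⟶ Y} {f : X ⟶ Z} {g : Y ⟶ Z}
    (h : IsPullback fst snd f g) {x : X} {y : Y} (e : f x = g y) :
    ∃ s, fst s = x ∧ snd s = y := by
  refine ⟨h.lift (TypeCat.ofHom fun _ : PUnit.{u+1} => x) (TypeCat.ofHom fun _ => y)
      (by ext; exact e) PUnit.unit,
    types_congr_hom (h.lift_fst _ _ _) _, types_congr_hom (h.lift_snd _ _ _) _⟩

open WalkingParallelPair WalkingParallelPairHom in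
/-- The morphism from the walking edge classifying an edge of a graph. -/
def gphEdgeHom {G : Gph} (e : G.obj zero) : walkingEdge ⟶ G where
  app k := match k with
    | zero => TypeCat.ofHom fun _ => e
    | one => TypeCat.ofHom fun b => bif b then G.map right e else G.map left e
  naturality k k' h := by
    change WalkingParallelPairHom k k' at h
    cases h with
    | left => ext u; rfl
    | right => ext u; rfl
    | id => simp

open WalkingParallelPair WalkingParallelPairHom in
/-- The morphism from the walking node classifying a vertex of a graph. -/
def gphNodeHom {G : Gph} (v : G.obj one) : walkingNode ⟶ G where
  app k := match k with
    | zero => TypeCat.ofHom fun (x : PEmpty) => x.elim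
    | one => TypeCat.ofHom fun _ => v
  naturality k k' h := by
    change WalkingParallelPairHom k k' at h
    cases h with
    | left => ext x; exact PEmpty.elim x
    | right => ext x; exact PEmpty.elim x
    | id => simp

open WalkingParallelPair WalkingParallelPairHom in
/-- A map of graphs is a 1-fibration (has the right lifting property against `srcNode`)
iff every edge downstairs whose source is in the image lifts with prescribed source. -/
lemma gph_fib_iff {G H : Gph} (p : G ⟶ H) :
    HasLiftingProperty srcNode p ↔
      ∀ (z : G.obj one) (e : H.obj zero), H.map left e = p.app one z →
        ∃ ez : G.obj zero, G.map left ez = z ∧ p.app zero ez = e := by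
  constructor
  · intro hlp z e he
    have hsq : CommSq (gphNodeHom z) srcNode p (gphEdgeHom e) := by
      constructor
      apply NatTrans.ext; funext k
      cases k with
      | zero => ext x; exact PEmpty.elim x
      | one => ext u; exact he.symm
    obtain ⟨l⟩ := (HasLiftingProperty.sq_hasLift hsq).exists_lift
    refine ⟨l.l.app zero PUnit.unit, ?_, ?_⟩
    · have h1 := types_congr_hom (l.l.naturality WalkingParallelPairHom.left) PUnit.unit
      simp only [types_comp_apply] at h1
      have h2 := types_congr_hom (congr_app l.fac_left one) PUnit.unit
      simp only [NatTrans.comp_app, types_comp_apply] at h2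
      exact h1.symm.trans h2
    · have h3 := types_congr_hom (congr_app l.fac_right zero) PUnit.unit
      exact h3
  · intro hfib
    constructor
    intro u v sq
    set z := u.app one PUnit.unit with hz
    set e := v.app zero PUnit.unit with hev
    have he : H.map left e = p.app one z := by
      have h1 := types_congr_hom (v.naturality WalkingParallelPairHom.left) PUnit.unit
      simp only [types_comp_apply] at h1
      have h2 := types_congr_hom (congr_app sq.w one) PUnit.unit
      simp only [NatTrans.comp_app, types_comp_apply] at h2
      exact h1.symm.trans h2.symm
    obtain ⟨ez, hsrc, hmap⟩ := hfib z e he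
    refine ⟨⟨⟨gphEdgeHom ez, ?_, ?_⟩⟩⟩
    · apply NatTrans.ext; funext k
      cases k with
      | zero => ext x; exact PEmpty.elim x
      | one => ext x; exact hsrc
    · apply NatTrans.ext; funext k
      cases k with
      | zero => ext x; exact hmap
      | one =>
        ext b
        cases b with
        | false =>
          have h1 := types_congr_hom (p.naturality WalkingParallelPairHom.left) ez
          simp only [types_comp_apply] at h1
          have h2 := types_congr_hom (v.naturality WalkingParallelPairHom.left) PUnit.unit
          simp only [types_comp_apply] at h2
          show p.app one (G.map left ez) = v.app one false
          rw [h1, hmap]; exact h2.symm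
        | true =>
          have h1 := types_congr_hom (p.naturality WalkingParallelPairHom.right) ez
          simp only [types_comp_apply] at h1
          have h2 := types_congr_hom (v.naturality WalkingParallelPairHom.right) PUnit.unit
          simp only [types_comp_apply] at h2
          show p.app one (G.map right ez) = v.app one true
          rw [h1, hmap]; exact h2.symm

open WalkingParallelPair WalkingParallelPairHom

/-- Given a commutative cube of graphs in which the top and bottom faces are pushouts along
monomorphisms, the back vertical faces are pullbacks, the back vertical maps `λ₁ : X ⟶ B`
and `λ₂ : Y ⟶ C` as well as the legs `i`, `j` of the bottom span are 1-fibrations (right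
lifting property against `srcNode`), and `i, i', j, j'` are monomorphisms, the induced map
`μ : Z ⟶ D` between the pushouts is a 1-fibration as well. -/
theorem cube_one_fibration
    {W X Y Z A B C D : Gph}
    -- top pushout: Z is the pushout of Y ← W → X, with W → Y and W → X monos
    (f : W ⟶ Y) (g : W ⟶ X) [Mono f] [Mono g]
    (f' : Y ⟶ Z) (g' : X ⟶ Z) (Htop : IsPushout f g f' g')
    -- bottom pushout: D is the pushout of C ← A → B along monos i : A ⟶ C, j : A ⟶ B
    (i : A ⟶ C) (j : A ⟶ B) [Mono i] [Mono j]
    (i' : C ⟶ D) (j' : B ⟶ D) [Mono i'] [Mono j'] (Hbot : IsPushout i j i' j')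
    -- vertical maps
    (w : W ⟶ A) (lam₁ : X ⟶ B) (lam₂ : Y ⟶ C) (μ : Z ⟶ D)
    -- back faces are pullbacks
    (hback₁ : IsPullback g w lam₁ j) (hback₂ : IsPullback f w lam₂ i)
    -- front faces commute
    (hfront₁ : g' ≫ μ = lam₁ ≫ j') (hfront₂ : f' ≫ μ = lam₂ ≫ i')
    -- fibration hypotheses
    [HasLiftingProperty srcNode lam₁] [HasLiftingProperty srcNode lam₂]
    [HasLiftingProperty srcNode i] [HasLiftingProperty srcNode j] :
    HasLiftingProperty srcNode μ := by
  rw [gph_fib_iff]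
  intro z e he
  -- pointwise pushouts and pullbacks
  have hZ1 : IsPushout (f.app one) (g.app one) (f'.app one) (g'.app one) :=
    Htop.map ((evaluation WalkingParallelPair Type).obj one)
  have hD1 : IsPushout (i.app one) (j.app one) (i'.app one) (j'.app one) :=
    Hbot.map ((evaluation WalkingParallelPair Type).obj one)
  have hD0 : IsPushout (i.app zero) (j.app zero) (i'.app zero) (j'.app zero) :=
    Hbot.map ((evaluation WalkingParallelPair Type).obj zero)
  have hB1 : IsPullback (g.app one) (w.app one) (lam₁.app one) (j.app one) :=
    hback₁.map ((evaluation WalkingParallelPair Type).obj one)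
  have hB2 : IsPullback (f.app one) (w.app one) (lam₂.app one) (i.app one) :=
    hback₂.map ((evaluation WalkingParallelPair Type).obj one)
  -- injectivity facts
  have hiinj : Function.Injective (i.app one) := (mono_iff_injective _).mp inferInstance
  have hi'inj : Function.Injective (i'.app one) := (mono_iff_injective _).mp inferInstance
  have hj'inj : Function.Injective (j'.app one) := (mono_iff_injective _).mp inferInstance
  -- elementwise fibrations
  have hlam₁ := (gph_fib_iff lam₁).mp inferInstance
  have hlam₂ := (gph_fib_iff lam₂).mp inferInstance
  -- commutativity of the front faces, elementwise
  have hf₁ : ∀ k x, μ.app k (g'.app k x) = j'.app k (lam₁.app k x) := by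
    intro k x
    have := types_congr_hom (congr_app hfront₁ k) x
    simpa using this
  have hf₂ : ∀ k y, μ.app k (f'.app k y) = i'.app k (lam₂.app k y) := by
    intro k y
    have := types_congr_hom (congr_app hfront₂ k) y
    simpa using this
  have htopw : ∀ k u, f'.app k (f.app k u) = g'.app k (g.app k u) := by
    intro k u
    have := types_congr_hom (congr_app Htop.w k) u
    simpa using this
  have hb₁w : ∀ k u, lam₁.app k (g.app k u) = j.app k (w.app k u) := by
    intro k u
    have := types_congr_hom (congr_app hback₁.w k) u
    simpa using this
  have hb₂w : ∀ k u, lam₂.app k (f.app k u) = i.app k (w.app k u) := by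
    intro k u
    have := types_congr_hom (congr_app hback₂.w k) u
    simpa using this
  rcases Gph.pushout_cases hZ1 z with ⟨y, rfl⟩ | ⟨x, rfl⟩ <;>
    rcases Gph.pushout_cases hD0 e with ⟨c, rfl⟩ | ⟨b, rfl⟩
  · -- z = f' y, e = i' c : lift along lam₂ directly
    have hsc : C.map left c = lam₂.app one y := by
      apply hi'inj
      rw [FunctorToTypes.naturality i' left c, he]
      exact hf₂ one y
    obtain ⟨ey, hy1, hy2⟩ := hlam₂ y c hsc
    refine ⟨f'.app zero ey, ?_, ?_⟩
    · rw [← FunctorToTypes.naturality f' left ey, hy1]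
    · rw [hf₂ zero ey, hy2]
  · -- z = f' y, e = j' b : go through the intersection and the pullback
    have hmix : i'.app one (lam₂.app one y) = j'.app one (B.map left b) := by
      rw [← hf₂ one y, ← he, FunctorToTypes.naturality j' left b]
    obtain ⟨a, ha1, ha2⟩ := Gph.pushout_inter hD1 hiinj hmix
    obtain ⟨w₀, hw1, hw2⟩ := Gph.pullback_pt hB2 ha1.symm
    have hsb : B.map left b = lam₁.app one (g.app one w₀) := by
      rw [hb₁w one w₀, hw2, ha2]
    obtain ⟨ex, hx1, hx2⟩ := hlam₁ (g.app one w₀) b hsb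
    refine ⟨g'.app zero ex, ?_, ?_⟩
    · rw [← FunctorToTypes.naturality g' left ex, hx1, ← htopw one w₀, hw1]
    · rw [hf₁ zero ex, hx2]
  · -- z = g' x, e = i' c : symmetric
    have hmix : i'.app one (C.map left c) = j'.app one (lam₁.app one x) := by
      rw [← hf₁ one x, ← he, FunctorToTypes.naturality i' left c]
    obtain ⟨a, ha1, ha2⟩ := Gph.pushout_inter hD1 hiinj hmix
    obtain ⟨w₀, hw1, hw2⟩ := Gph.pullback_pt hB1 ha2.symm
    have hsc : C.map left c = lam₂.app one (f.app one w₀) := by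
      rw [hb₂w one w₀, hw2, ha1]
    obtain ⟨ey, hy1, hy2⟩ := hlam₂ (f.app one w₀) c hsc
    refine ⟨f'.app zero ey, ?_, ?_⟩
    · rw [← FunctorToTypes.naturality f' left ey, hy1, htopw one w₀, hw1]
    · rw [hf₂ zero ey, hy2]
  · -- z = g' x, e = j' b : lift along lam₁ directly
    have hsb : B.map left b = lam₁.app one x := by
      apply hj'inj
      rw [FunctorToTypes.naturality j' left b, he]
      exact hf₁ one x
    obtain ⟨ex, hx1, hx2⟩ := hlam₁ x b hsb
    refine ⟨g'.app zero ex, ?_, ?_⟩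
    · rw [← FunctorToTypes.naturality g' left ex, hx1]
    · rw [hf₁ zero ex, hx2]
end

section
/- Monomorphisms whose pullback against another mono is initial yield a coproduct subobject: if i : A ↪ X and j : B ↪ X are monomorphisms in an adhesive category (or a topos) with A ×_X B ≅ 0 (strict initial), then the induced map A + B → X is a monomorphism. -/
open CategoryTheory CategoryTheory.Limits

/-- A commuting square whose two left corners are initial objects is a pullback,
provided initial objects are strict. -/
lemma isPullback_of_both_initial {𝒞 : Type*} [Category 𝒞] [HasStrictInitialObjects 𝒞]
    {W P T A : 𝒞} (hW : IsInitial W) (hP : IsInitial P)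
    (f' : W ⟶ T) (w : W ⟶ P) (u : T ⟶ A) (v : P ⟶ A) :
    IsPullback f' w u v := by
  have comm : f' ≫ u = w ≫ v := hW.hom_ext _ _
  refine IsPullback.of_isLimit (PullbackCone.IsLimit.mk comm
    (fun s => ?_) (fun s => ?_) (fun s => ?_) (fun s m _ _ => ?_)
    : IsLimit (PullbackCone.mk f' w comm))
  · -- lift
    haveI : IsIso s.snd := hP.isIso_to s.snd
    exact (hP.ofIso (asIso s.snd).symm).to W
  · haveI : IsIso s.snd := hP.isIso_to s.snd
    exact (hP.ofIso (asIso s.snd).symm).hom_ext _ _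
  · haveI : IsIso s.snd := hP.isIso_to s.snd
    exact (hP.ofIso (asIso s.snd).symm).hom_ext _ _
  · haveI : IsIso s.snd := hP.isIso_to s.snd
    exact (hP.ofIso (asIso s.snd).symm).hom_ext _ _

/-- In an adhesive category with strict initial object, any morphism `t : T ⟶ A ⨿ B`
admits a jointly-epic decomposition into a part landing in `A` and a part landing in `B`. -/
lemma jointly_epi_decomp {𝒞 : Type*} [Category 𝒞]
    [Adhesive 𝒞] [HasStrictInitialObjects 𝒞] [HasBinaryCoproducts 𝒞]
    {A B P : 𝒞} (hinit : IsInitial P)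
    {T : 𝒞} (t : T ⟶ A ⨿ B) :
    ∃ (T₁ T₂ : 𝒞) (e₁ : T₁ ⟶ T) (e₂ : T₂ ⟶ T) (r₁ : T₁ ⟶ A) (r₂ : T₂ ⟶ B),
      e₁ ≫ t = r₁ ≫ coprod.inl ∧ e₂ ≫ t = r₂ ≫ coprod.inr ∧
      ∀ {S : 𝒞} (u v : T ⟶ S), e₁ ≫ u = e₁ ≫ v → e₂ ≫ u = e₂ ≫ v → u = v := by
  haveI mp : Mono (hinit.to A) := hinit.mono_from _
  haveI mq : Mono (hinit.to B) := hinit.mono_from _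
  have H₀ : IsPushout (hinit.to A) (hinit.to B) (coprod.inl : A ⟶ A ⨿ B) coprod.inr := by
    refine IsPushout.of_isColimit (PushoutCocone.IsColimit.mk (hinit.hom_ext _ _)
      (fun s => coprod.desc s.inl s.inr)
      (fun s => coprod.inl_desc _ _) (fun s => coprod.inr_desc _ _) ?_)
    intro s m h₁ h₂
    apply coprod.hom_ext <;> simp [h₁, h₂, coprod.inl_desc, coprod.inr_desc]
  haveI : Mono (coprod.inl : A ⟶ A ⨿ B) := Adhesive.mono_of_isPushout_of_mono_right H₀
  haveI : Mono (coprod.inr : B ⟶ A ⨿ B) := Adhesive.mono_of_isPushout_of_mono_left H₀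
  have VK := Adhesive.van_kampen H₀
  haveI h1 : HasPullback (coprod.inl : A ⟶ A ⨿ B) t := Adhesive.hasPullback_of_mono_left _ _
  haveI h2 : HasPullback (coprod.inr : B ⟶ A ⨿ B) t := Adhesive.hasPullback_of_mono_left _ _
  haveI h0 : HasPullback (hinit.to A ≫ coprod.inl) t := Adhesive.hasPullback_of_mono_left _ _
  set T₁ := pullback (coprod.inl : A ⟶ A ⨿ B) t with hT₁
  set T₂ := pullback (coprod.inr : B ⟶ A ⨿ B) t with hT₂
  set W' := pullback (hinit.to A ≫ coprod.inl) t with hW'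
  have hWfst : IsIso (pullback.fst (hinit.to A ≫ coprod.inl) t) :=
    hinit.isIso_to _
  have hWinit : IsInitial W' :=
    hinit.ofIso (@asIso _ _ _ _ _ hWfst).symm
  have f'cond : (pullback.fst (hinit.to A ≫ coprod.inl) t ≫ hinit.to A) ≫ coprod.inl
      = pullback.snd (hinit.to A ≫ coprod.inl) t ≫ t := hWinit.hom_ext _ _
  have g'cond : (pullback.fst (hinit.to A ≫ coprod.inl) t ≫ hinit.to B) ≫ coprod.inr
      = pullback.snd (hinit.to A ≫ coprod.inl) t ≫ t := hWinit.hom_ext _ _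
  set f' : W' ⟶ T₁ := pullback.lift _ _ f'cond with hf'
  set g' : W' ⟶ T₂ := pullback.lift _ _ g'cond with hg'
  have hf : IsPullback f' (pullback.fst (hinit.to A ≫ coprod.inl) t)
      (pullback.fst (coprod.inl : A ⟶ A ⨿ B) t) (hinit.to A) :=
    isPullback_of_both_initial hWinit hinit _ _ _ _
  have hg : IsPullback g' (pullback.fst (hinit.to A ≫ coprod.inl) t)
      (pullback.fst (coprod.inr : B ⟶ A ⨿ B) t) (hinit.to B) :=
    isPullback_of_both_initial hWinit hinit _ _ _ _
  have hh : CommSq (pullback.snd (coprod.inl : A ⟶ A ⨿ B) t)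
      (pullback.fst (coprod.inl : A ⟶ A ⨿ B) t) t coprod.inl := ⟨pullback.condition.symm⟩
  have hi : CommSq (pullback.snd (coprod.inr : B ⟶ A ⨿ B) t)
      (pullback.fst (coprod.inr : B ⟶ A ⨿ B) t) t coprod.inr := ⟨pullback.condition.symm⟩
  have wsq : CommSq f' g' (pullback.snd (coprod.inl : A ⟶ A ⨿ B) t)
      (pullback.snd (coprod.inr : B ⟶ A ⨿ B) t) := ⟨hWinit.hom_ext _ _⟩
  have HP : IsPushout f' g' (pullback.snd (coprod.inl : A ⟶ A ⨿ B) t)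
      (pullback.snd (coprod.inr : B ⟶ A ⨿ B) t) :=
    (VK f' g' _ _ _ _ _ t hf hg hh hi wsq).mpr
      ⟨(IsPullback.of_hasPullback (coprod.inl : A ⟶ A ⨿ B) t).flip,
       (IsPullback.of_hasPullback (coprod.inr : B ⟶ A ⨿ B) t).flip⟩
  refine ⟨T₁, T₂, pullback.snd _ _, pullback.snd _ _, pullback.fst _ _, pullback.fst _ _,
    pullback.condition.symm, pullback.condition.symm, ?_⟩
  intro S u v hu hv
  exact PushoutCocone.IsColimit.hom_ext HP.isColimit hu hv

/-- In an adhesive category with a strict initial object, two monomorphisms `i : A ⟶ X`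
and `j : B ⟶ X` whose pullback `A ×_X B` is initial induce a monomorphism
`[i, j] : A ⨿ B ⟶ X` from the coproduct. -/
theorem coprod_desc_mono_of_initial_pullback {𝒞 : Type*} [Category 𝒞]
    [Adhesive 𝒞] [HasInitial 𝒞] [HasStrictInitialObjects 𝒞] [HasBinaryCoproducts 𝒞]
    {A B X P : 𝒞} (i : A ⟶ X) (j : B ⟶ X) [Mono i] [Mono j]
    (p : P ⟶ A) (q : P ⟶ B) (hpb : IsPullback p q i j) (hinit : IsInitial P) :
    Mono (coprod.desc i j) := by
  constructor
  intro T a b hab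
  obtain ⟨T₁, T₂, e₁, e₂, r₁, r₂, he₁, he₂, jointly⟩ := jointly_epi_decomp hinit b
  apply jointly
  · -- on the part of T mapping (via b) into A
    obtain ⟨S₁, S₂, d₁, d₂, s₁, s₂, hd₁, hd₂, jointly'⟩ := jointly_epi_decomp hinit (e₁ ≫ a)
    apply jointly'
    · -- S₁ : both a and b land in A here
      have key : s₁ ≫ i = (d₁ ≫ r₁) ≫ i := by
        calc s₁ ≫ i = (s₁ ≫ coprod.inl) ≫ coprod.desc i j := by simp [coprod.inl_desc, coprod.inr_desc]
          _ = (d₁ ≫ (e₁ ≫ a)) ≫ coprod.desc i j := by rw [hd₁]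
          _ = d₁ ≫ e₁ ≫ (a ≫ coprod.desc i j) := by simp
          _ = d₁ ≫ e₁ ≫ (b ≫ coprod.desc i j) := by rw [hab]
          _ = (d₁ ≫ (e₁ ≫ b)) ≫ coprod.desc i j := by simp
          _ = (d₁ ≫ (r₁ ≫ coprod.inl)) ≫ coprod.desc i j := by rw [he₁]
          _ = (d₁ ≫ r₁) ≫ i := by simp [coprod.inl_desc, coprod.inr_desc]
      have hs₁ : s₁ = d₁ ≫ r₁ := by rwa [cancel_mono] at key
      calc d₁ ≫ e₁ ≫ a = s₁ ≫ coprod.inl := hd₁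
        _ = d₁ ≫ r₁ ≫ coprod.inl := by rw [hs₁, Category.assoc]
        _ = d₁ ≫ e₁ ≫ b := by rw [he₁]
    · -- S₂ : a lands in B, b lands in A ⇒ S₂ is initial
      have key : (d₂ ≫ r₁) ≫ i = s₂ ≫ j := by
        calc (d₂ ≫ r₁) ≫ i = (d₂ ≫ (r₁ ≫ coprod.inl)) ≫ coprod.desc i j := by simp [coprod.inl_desc, coprod.inr_desc]
          _ = d₂ ≫ e₁ ≫ (b ≫ coprod.desc i j) := by rw [← he₁]; simp
          _ = d₂ ≫ e₁ ≫ (a ≫ coprod.desc i j) := by rw [hab]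
          _ = (d₂ ≫ (e₁ ≫ a)) ≫ coprod.desc i j := by simp
          _ = (s₂ ≫ coprod.inr) ≫ coprod.desc i j := by rw [hd₂]
          _ = s₂ ≫ j := by simp [coprod.inl_desc, coprod.inr_desc]
      have l : S₂ ⟶ P := hpb.lift (d₂ ≫ r₁) s₂ key
      have : IsInitial S₂ := hinit.ofIso (@asIso _ _ _ _ l (hinit.isIso_to l)).symm
      exact this.hom_ext _ _
  · -- on the part of T mapping (via b) into B
    obtain ⟨S₁, S₂, d₁, d₂, s₁, s₂, hd₁, hd₂, jointly'⟩ := jointly_epi_decomp hinit (e₂ ≫ a)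
    apply jointly'
    · -- S₁ : a lands in A, b lands in B ⇒ S₁ is initial
      have key : s₁ ≫ i = (d₁ ≫ r₂) ≫ j := by
        calc s₁ ≫ i = (s₁ ≫ coprod.inl) ≫ coprod.desc i j := by simp [coprod.inl_desc, coprod.inr_desc]
          _ = (d₁ ≫ (e₂ ≫ a)) ≫ coprod.desc i j := by rw [hd₁]
          _ = d₁ ≫ e₂ ≫ (a ≫ coprod.desc i j) := by simp
          _ = d₁ ≫ e₂ ≫ (b ≫ coprod.desc i j) := by rw [hab]
          _ = (d₁ ≫ (e₂ ≫ b)) ≫ coprod.desc i j := by simp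
          _ = (d₁ ≫ (r₂ ≫ coprod.inr)) ≫ coprod.desc i j := by rw [he₂]
          _ = (d₁ ≫ r₂) ≫ j := by simp [coprod.inl_desc, coprod.inr_desc]
      have l : S₁ ⟶ P := hpb.lift s₁ (d₁ ≫ r₂) key
      have : IsInitial S₁ := hinit.ofIso (@asIso _ _ _ _ l (hinit.isIso_to l)).symm
      exact this.hom_ext _ _
    · -- S₂ : both land in B
      have key : s₂ ≫ j = (d₂ ≫ r₂) ≫ j := by
        calc s₂ ≫ j = (s₂ ≫ coprod.inr) ≫ coprod.desc i j := by simp [coprod.inl_desc, coprod.inr_desc]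
          _ = (d₂ ≫ (e₂ ≫ a)) ≫ coprod.desc i j := by rw [hd₂]
          _ = d₂ ≫ e₂ ≫ (a ≫ coprod.desc i j) := by simp
          _ = d₂ ≫ e₂ ≫ (b ≫ coprod.desc i j) := by rw [hab]
          _ = (d₂ ≫ (e₂ ≫ b)) ≫ coprod.desc i j := by simp
          _ = (d₂ ≫ (r₂ ≫ coprod.inr)) ≫ coprod.desc i j := by rw [he₂]
          _ = (d₂ ≫ r₂) ≫ j := by simp [coprod.inl_desc, coprod.inr_desc]
      have hs₂ : s₂ = d₂ ≫ r₂ := by rwa [cancel_mono] at key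
      calc d₂ ≫ e₂ ≫ a = s₂ ≫ coprod.inr := hd₂
        _ = d₂ ≫ r₂ ≫ coprod.inr := by rw [hs₂, Category.assoc]
        _ = d₂ ≫ e₂ ≫ b := by rw [he₂]
end
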